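/- Let k ≤ n be positive integers, let α_1, …, α_k ∈ ℚ be distinct rational numbers, and let β_1, …, β_n ∈ ℚ be rational numbers such that {β_1, …, β_n} = {α_1, …, α_k} as sets. Then for every integer r with n−k+1 ≤ r ≤ n, one has ∑_{j=0}^{r} (−1)^j e_{r−j}(β_1, …, β_n) h_j(α_1, …, α_k) = 0. -/

import Mathlib

/-- `eSym n d β` is the elementary symmetric polynomial `e_d(β_1, …, β_n)`
evaluated at the rationals `β_1, …, β_n`, with `e_0 = 1`. -/
def eSym (n d : ℕ) (β : Fin n → ℚ) : ℚ :=
  ∑ T ∈ Finset.powersetCard d (Finset.univ : Finset (Fin n)), ∏ i ∈ T, β i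

/-- `hSym k d α` is the complete homogeneous symmetric polynomial `h_d(α_1, …, α_k)`
evaluated at the rationals `α_1, …, α_k`, with `h_0 = 1`. -/
def hSym (k d : ℕ) (α : Fin k → ℚ) : ℚ :=
  ∑ m : Sym (Fin k) d, (m.1.map α).prod

section Aux
open Polynomial Finset

lemma multiset_prod_count {k : ℕ} (m : Multiset (Fin k)) (α : Fin k → ℚ) :
    (m.map α).prod = ∏ i : Fin k, α i ^ m.count i := by
  rw [Finset.prod_multiset_map_count]
  apply Finset.prod_subset (Finset.subset_univ _)
  intro x _ hx
  simp [Multiset.count_eq_zero_of_notMem (by simpa using hx)]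

lemma hSym_eq_coeff (k : ℕ) (α : Fin k → ℚ) (d : ℕ) :
    hSym k d α
      = PowerSeries.coeff d (∏ i : Fin k, PowerSeries.mk (fun t => α i ^ t)) := by
  rw [PowerSeries.coeff_prod]
  simp only [PowerSeries.coeff_mk]
  rw [hSym]
  apply Finset.sum_bij (fun (m : Sym (Fin k) d) _ => Multiset.toFinsupp m.1)
  · intro m _
    simp only [Finset.mem_finsuppAntidiag]
    refine ⟨?_, Finset.subset_univ _⟩
    have h1 : univ.sum ⇑(Multiset.toFinsupp m.1) = (Multiset.toFinsupp m.1).sum (fun _ x => x) :=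
      (Finsupp.sum_fintype (Multiset.toFinsupp m.1) (fun _ x => x) (fun _ => rfl)).symm
    have h2 := Finsupp.card_toMultiset (Multiset.toFinsupp m.1)
    rw [Multiset.toFinsupp_toMultiset] at h2
    rw [h1]
    simpa [m.2, Function.id_def] using h2.symm
  · intro a _ b _ hab
    exact Subtype.ext (Multiset.toFinsupp.injective hab)
  · intro l hl
    simp only [Finset.mem_finsuppAntidiag] at hl
    refine ⟨⟨Finsupp.toMultiset l, ?_⟩, Finset.mem_univ _, ?_⟩
    · rw [Finsupp.card_toMultiset]
      rw [Finsupp.sum_fintype _ _ (fun _ => rfl)]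
      exact hl.1
    · simp [Multiset.toFinsupp_eq_iff]
  · intro m _
    rw [multiset_prod_count]
    simp [Multiset.toFinsupp_apply]

lemma geom_inv (a : ℚ) :
    ((1 : PowerSeries ℚ) - PowerSeries.C a * PowerSeries.X)
      * PowerSeries.mk (fun t => a ^ t) = 1 := by
  ext n
  rw [sub_mul, one_mul, map_sub, mul_assoc]
  cases n with
  | zero => simp
  | succ n =>
      rw [PowerSeries.coeff_C_mul, PowerSeries.coeff_succ_X_mul]
      simp [pow_succ, mul_comm]

lemma coeff_prod_one_add {ι : Type*} [DecidableEq ι] (s : Finset ι) (c : ι → ℚ) :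
    ∀ d, (∏ i ∈ s, (1 + C (c i) * X)).coeff d
      = ∑ T ∈ s.powersetCard d, ∏ i ∈ T, c i := by
  induction s using Finset.induction_on with
  | empty =>
      intro d
      cases d with
      | zero => simp
      | succ d =>
          rw [Finset.powersetCard_eq_empty.mpr (by simp)]
          simp [Polynomial.coeff_one]
  | @insert a s ha ih =>
    intro d
    rw [Finset.prod_insert ha, add_mul, one_mul]
    cases d with
    | zero =>
        simp [ih 0, mul_assoc, Polynomial.coeff_C_mul, Polynomial.mul_coeff_zero]
    | succ d =>
        rw [Polynomial.coeff_add, mul_assoc, Polynomial.coeff_C_mul,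
          Polynomial.coeff_X_mul, ih, ih, Finset.powersetCard_succ_insert ha,
          Finset.sum_union, Finset.sum_image]
        · rw [mul_sum]
          congr 1
          apply Finset.sum_congr rfl
          intro T hT
          rw [Finset.mem_powersetCard] at hT
          rw [Finset.prod_insert (fun haT => ha (hT.1 haT))]
        · intro x hx y hy hxy
          rw [Finset.mem_coe, Finset.mem_powersetCard] at hx hy
          have hax : a ∉ x := fun h => ha (hx.1 h)
          have hay : a ∉ y := fun h => ha (hy.1 h)
          rw [← Finset.erase_insert hax, ← Finset.erase_insert hay, hxy]
        · rw [Finset.disjoint_left]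
          intro T hT hT2
          rw [Finset.mem_powersetCard] at hT
          rw [Finset.mem_image] at hT2
          obtain ⟨U, hU, rfl⟩ := hT2
          exact ha (hT.1 (Finset.mem_insert_self a U))

lemma coeff_prod_one_sub {n : ℕ} (β : Fin n → ℚ) (d : ℕ) :
    (∏ i : Fin n, (1 - C (β i) * X)).coeff d = (-1 : ℚ) ^ d * eSym n d β := by
  have : ∀ i : Fin n, (1 : ℚ[X]) - C (β i) * X = 1 + C (-β i) * X := by
    intro i; rw [map_neg]; ring
  simp only [this]
  rw [coeff_prod_one_add, eSym, mul_sum]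
  apply Finset.sum_congr rfl
  intro T hT
  rw [Finset.mem_powersetCard] at hT
  rw [← hT.2]
  rw [Finset.prod_congr rfl (fun i _ => (neg_one_mul (β i)).symm),
    Finset.prod_mul_distrib, Finset.prod_const]

lemma neg_one_pow_sub_q {r j : ℕ} (h : j ≤ r) : (-1:ℚ)^(r-j) = (-1)^r * (-1)^j := by
  have h1 : (-1:ℚ)^(r-j) * (-1)^j = (-1)^r := by rw [← pow_add, Nat.sub_add_cancel h]
  have h2 : (-1:ℚ)^j * (-1)^j = 1 := by rw [← mul_pow]; norm_num
  calc (-1:ℚ)^(r-j) = (-1)^(r-j) * ((-1)^j * (-1)^j) := by rw [h2, mul_one]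
    _ = ((-1)^(r-j) * (-1)^j) * (-1)^j := by ring
    _ = (-1)^r * (-1)^j := by rw [h1]

end Aux

open Polynomial Finset in
theorem stmt0 (n k : ℕ) (hk : 1 ≤ k) (hkn : k ≤ n)
    (α : Fin k → ℚ) (hα : Function.Injective α)
    (β : Fin n → ℚ) (hβ : Set.range β = Set.range α)
    (r : ℕ) (hr1 : n - k + 1 ≤ r) (hr2 : r ≤ n) :
    ∑ j ∈ Finset.range (r + 1), (-1 : ℚ) ^ j * eSym n (r - j) β * hSym k j α = 0 := by
  classical
  set Mα : Multiset ℚ := Multiset.map α Finset.univ.val with hMα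
  set Mβ : Multiset ℚ := Multiset.map β Finset.univ.val with hMβ
  have hle : Mα ≤ Mβ := by
    rw [Multiset.le_iff_count]
    intro a
    by_cases h : a ∈ Mα
    · have hnd : Mα.Nodup := Multiset.Nodup.map hα Finset.univ.nodup
      have h1 : Mα.count a ≤ 1 := Multiset.nodup_iff_count_le_one.mp hnd a
      have h2 : a ∈ Mβ := by
        rw [hMα, Multiset.mem_map] at h
        obtain ⟨i, _, rfl⟩ := h
        have : α i ∈ Set.range β := by rw [hβ]; exact ⟨i, rfl⟩
        obtain ⟨j, hj⟩ := this
        rw [hMβ, Multiset.mem_map]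
        exact ⟨j, Finset.mem_univ_val _, hj⟩
      have h3 : 1 ≤ Mβ.count a := Multiset.one_le_count_iff_mem.mpr h2
      omega
    · simp [Multiset.count_eq_zero_of_notMem h]
  set g : ℚ → ℚ[X] := fun b => 1 - C b * X with hg
  set R : ℚ[X] := ((Mβ - Mα).map g).prod with hR
  have hfact : (∏ i : Fin n, ((1:ℚ[X]) - C (β i) * X))
      = (∏ i : Fin k, ((1:ℚ[X]) - C (α i) * X)) * R := by
    have h1 : ∏ i : Fin n, ((1:ℚ[X]) - C (β i) * X) = (Mβ.map g).prod := by
      rw [Finset.prod_eq_multiset_prod, hMβ, Multiset.map_map]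
      rfl
    have h2 : ∏ i : Fin k, ((1:ℚ[X]) - C (α i) * X) = (Mα.map g).prod := by
      rw [Finset.prod_eq_multiset_prod, hMα, Multiset.map_map]
      rfl
    have h3 : Mβ = Mα + (Mβ - Mα) := by
      rw [add_comm]
      exact (tsub_add_cancel_of_le hle).symm
    rw [h1, h2, h3, Multiset.map_add, Multiset.prod_add]
  -- degree of R
  have hdeg : R.natDegree ≤ n - k := by
    refine le_trans (Polynomial.natDegree_multiset_prod_le _) ?_
    have h1 : ∀ x ∈ (Multiset.map Polynomial.natDegree ((Mβ - Mα).map g)), x ≤ 1 := by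
      intro x hx
      rw [Multiset.map_map, Multiset.mem_map] at hx
      obtain ⟨b, _, rfl⟩ := hx
      simp only [Function.comp_apply, hg]
      refine le_trans (Polynomial.natDegree_sub_le _ _) ?_
      simp [Polynomial.natDegree_C_mul_le]
      exact le_trans (Polynomial.natDegree_mul_le) (by simp)
    refine le_trans (Multiset.sum_le_card_nsmul _ 1 h1) ?_
    rw [Multiset.card_map, Multiset.card_map, Multiset.card_sub hle]
    simp only [Multiset.card_map, Multiset.card_sub hle, hMα, hMβ, smul_eq_mul, mul_one]
    simp
  -- power series identity Q*H = 1
  have hQH : ((∏ i : Fin k, ((1:ℚ[X]) - C (α i) * X) : ℚ[X]) : PowerSeries ℚ)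
      * PowerSeries.mk (fun j => hSym k j α) = 1 := by
    have hH : PowerSeries.mk (fun j => hSym k j α)
        = ∏ i : Fin k, PowerSeries.mk fun t => α i ^ t := by
      ext d
      rw [PowerSeries.coeff_mk, hSym_eq_coeff]
    have hcoe : ((∏ i : Fin k, ((1:ℚ[X]) - C (α i) * X) : ℚ[X]) : PowerSeries ℚ)
        = ∏ i : Fin k, ((1 : PowerSeries ℚ) - PowerSeries.C (α i) * PowerSeries.X) := by
      rw [← Polynomial.coeToPowerSeries.ringHom_apply, map_prod]
      apply Finset.prod_congr rfl
      intro i _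
      simp [map_sub, map_mul]
    rw [hH, hcoe, ← Finset.prod_mul_distrib]
    apply Finset.prod_eq_one
    intro i _
    exact geom_inv (α i)
  -- coefficient computation
  have hsum : ∑ t ∈ Finset.range (r+1), (-1:ℚ)^t * eSym n t β * hSym k (r-t) α = 0 := by
    have h0 : ((∏ i : Fin n, ((1:ℚ[X]) - C (β i) * X) : ℚ[X]) : PowerSeries ℚ)
        * PowerSeries.mk (fun j => hSym k j α) = (R : PowerSeries ℚ) := by
      rw [hfact, Polynomial.coe_mul, mul_right_comm, hQH, one_mul]
    have h1 := congrArg (PowerSeries.coeff r) h0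
    rw [PowerSeries.coeff_mul, Polynomial.coeff_coe,
      Polynomial.coeff_eq_zero_of_natDegree_lt (by omega)] at h1
    rw [Finset.Nat.sum_antidiagonal_eq_sum_range_succ_mk] at h1
    rw [← h1]
    apply Finset.sum_congr rfl
    intro t _
    rw [Polynomial.coeff_coe, coeff_prod_one_sub, PowerSeries.coeff_mk]
  -- reflect and sign
  have hsum2 : ∑ j ∈ Finset.range (r+1), (-1:ℚ)^(r-j) * eSym n (r-j) β * hSym k j α = 0 := by
    rw [← hsum, ← Finset.sum_range_reflect
      (fun t => (-1:ℚ)^t * eSym n t β * hSym k (r-t) α) (r+1)]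
    apply Finset.sum_congr rfl
    intro j hj
    rw [Finset.mem_range] at hj
    have hj' : j ≤ r := by omega
    have : r + 1 - 1 - j = r - j := by omega
    rw [this, Nat.sub_sub_self hj']
  have hmul : (-1:ℚ)^r * (∑ j ∈ Finset.range (r + 1),
      (-1 : ℚ) ^ j * eSym n (r - j) β * hSym k j α) = 0 := by
    rw [Finset.mul_sum, ← hsum2]
    apply Finset.sum_congr rfl
    intro j hj
    rw [Finset.mem_range] at hj
    rw [neg_one_pow_sub_q (by omega : j ≤ r)]
    ring
  rcases mul_eq_zero.mp hmul with h | h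
  · exact absurd h (pow_ne_zero _ (by norm_num))
  · exact h
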